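/- In a complete graph K_m with nodes sorted by non-decreasing threshold t(v_1) ≤ ... ≤ t(v_m), for any 1 ≤ ℓ ≤ λ, if there exists an ℓ-optimal incentive solution for K_m that influences exactly k < m nodes by the end of round ℓ−1, then there exists an ℓ-optimal solution (same cost) that influences exactly the nodes {v_1, ..., v_k} by the end of round ℓ−1. -/

import Mathlib

open Finset

/-- Influence process on a complete graph with node set `{0,…,m-1}`, thresholds `t`,
incentives `p`: at round 0 exactly the nodes with `p v = t v` are influenced; afterwards
a node is influenced once the number of already influenced other nodes reaches `t v - p v`. -/
def kInfl (m : ℕ) (t p : ℕ → ℕ) : ℕ → Finset ℕ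
  | 0 => (range m).filter fun v => p v = t v
  | ℓ + 1 => kInfl m t p ℓ ∪ (range m).filter fun v =>
      t v - p v ≤ ((kInfl m t p ℓ).erase v).card

/-- `kOpt t ℓ m`: minimum total incentive influencing all of the complete graph on
`{0,…,m-1}` within `ℓ` rounds. -/
noncomputable def kOpt (t : ℕ → ℕ) (ℓ m : ℕ) : ℕ :=
  sInf {c : ℕ | ∃ p : ℕ → ℕ, (∀ v < m, p v ≤ t v) ∧
    kInfl m t p ℓ = range m ∧ c = ∑ v ∈ range m, p v}

lemma kInfl_zero (m : ℕ) (t p : ℕ → ℕ) :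
    kInfl m t p 0 = (range m).filter fun v => p v = t v := rfl

lemma kInfl_succ (m : ℕ) (t p : ℕ → ℕ) (r : ℕ) :
    kInfl m t p (r + 1) = kInfl m t p r ∪ (range m).filter fun v =>
      t v - p v ≤ ((kInfl m t p r).erase v).card := rfl

lemma kInfl_subset_range (m : ℕ) (t p : ℕ → ℕ) : ∀ r, kInfl m t p r ⊆ range m
  | 0 => filter_subset _ _
  | r + 1 => union_subset (kInfl_subset_range m t p r) (filter_subset _ _)

lemma kInfl_mono_succ (m : ℕ) (t p : ℕ → ℕ) (r : ℕ) :
    kInfl m t p r ⊆ kInfl m t p (r + 1) := by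
  rw [kInfl_succ]; exact subset_union_left

lemma kInfl_gap_le (m : ℕ) (t p : ℕ → ℕ) :
    ∀ r v, v ∈ kInfl m t p (r + 1) → t v - p v ≤ (kInfl m t p r).card := by
  intro r
  induction r with
  | zero =>
    intro v hv
    rw [kInfl_succ] at hv
    rcases mem_union.1 hv with h | h
    · rw [kInfl_zero] at h
      have := (mem_filter.1 h).2
      omega
    · exact le_trans (mem_filter.1 h).2 (card_le_card (erase_subset _ _))
  | succ r ih =>
    intro v hv
    rw [kInfl_succ] at hv
    rcases mem_union.1 hv with h | h
    · exact le_trans (ih v h) (card_le_card (kInfl_mono_succ m t p r))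
    · exact le_trans (mem_filter.1 h).2 (card_le_card (erase_subset _ _))

/-- A node not yet influenced after round `r` has a strictly larger gap than any
influenced node. -/
lemma gap_lt (m r : ℕ) (t p : ℕ → ℕ) (hp : ∀ v < m, p v ≤ t v)
    {u v : ℕ} (hu : u < m) (huS : u ∉ kInfl m t p r) (hvS : v ∈ kInfl m t p r) :
    t v - p v < t u - p u := by
  cases r with
  | zero =>
    rw [kInfl_zero] at huS hvS
    have h1 := (mem_filter.1 hvS).2
    have h2 : ¬ (p u = t u) := fun h => huS (mem_filter.2 ⟨mem_range.2 hu, h⟩)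
    have h3 := hp u hu
    omega
  | succ s =>
    have h1 := kInfl_gap_le m t p s v hvS
    rw [kInfl_succ] at huS
    have h2 : u ∉ kInfl m t p s := fun h => huS (mem_union_left _ h)
    have h3 : ¬ (t u - p u ≤ ((kInfl m t p s).erase u).card) := fun h =>
      huS (mem_union_right _ (mem_filter.2 ⟨mem_range.2 hu, h⟩))
    rw [erase_eq_of_notMem h2] at h3
    omega

/-- Coupling lemma: if `σ` maps each node to a node with a smaller or equal gap
(in the `q`-process), then the `σ`-image of the `p`-process is dominated by the
`q`-process. -/
lemma kInfl_image_subset (m : ℕ) (t p q σ : ℕ → ℕ)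
    (hσinj : Function.Injective σ) (hσm : ∀ x < m, σ x < m)
    (hq : ∀ y < m, q y ≤ t y)
    (hgap : ∀ x < m, t (σ x) - q (σ x) ≤ t x - p x) :
    ∀ r, (kInfl m t p r).image σ ⊆ kInfl m t q r := by
  intro r
  induction r with
  | zero =>
    intro y hy
    obtain ⟨x, hx, rfl⟩ := mem_image.1 hy
    rw [kInfl_zero] at hx ⊢
    obtain ⟨hxm, hxe⟩ := mem_filter.1 hx
    rw [mem_range] at hxm
    have h1 := hgap x hxm
    have h2 := hq (σ x) (hσm x hxm)
    exact mem_filter.2 ⟨mem_range.2 (hσm x hxm), by omega⟩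
  | succ r ih =>
    intro y hy
    obtain ⟨x, hx, rfl⟩ := mem_image.1 hy
    rw [kInfl_succ] at hx ⊢
    rcases mem_union.1 hx with h | h
    · exact mem_union_left _ (ih (mem_image_of_mem σ h))
    · obtain ⟨hxm, hxc⟩ := mem_filter.1 h
      rw [mem_range] at hxm
      refine mem_union_right _ (mem_filter.2 ⟨mem_range.2 (hσm x hxm), ?_⟩)
      have h1 := hgap x hxm
      have h2 : ((kInfl m t p r).erase x).card
          = (((kInfl m t p r).image σ).erase (σ x)).card := by
        rw [← image_erase hσinj, card_image_of_injective _ hσinj]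
      have h3 : ((kInfl m t p r).image σ).erase (σ x) ⊆ (kInfl m t q r).erase (σ x) :=
        erase_subset_erase _ ih
      have h4 := card_le_card h3
      omega

/-- in a complete graph with non-decreasing thresholds, if some
`ℓ`-optimal solution influences exactly `k < m` nodes by the end of round `ℓ-1`, then
there is an `ℓ`-optimal solution (same cost) influencing exactly the `k` nodes of
smallest threshold by the end of round `ℓ-1`. -/
theorem clique_prefix_optimal (m lam ℓ k : ℕ) (hl1 : 1 ≤ ℓ) (hl2 : ℓ ≤ lam)
    (t p : ℕ → ℕ)
    (hmono : ∀ i j, i ≤ j → j < m → t i ≤ t j)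
    (hbd : ∀ v < m, 1 ≤ t v ∧ t v ≤ m - 1)
    (hp : ∀ v < m, p v ≤ t v)
    (hcov : kInfl m t p ℓ = range m)
    (hopt : ∀ q : ℕ → ℕ, (∀ v < m, q v ≤ t v) → kInfl m t q ℓ = range m →
      ∑ v ∈ range m, p v ≤ ∑ v ∈ range m, q v)
    (hk : (kInfl m t p (ℓ - 1)).card = k) (hkm : k < m) :
    ∃ q : ℕ → ℕ, (∀ v < m, q v ≤ t v) ∧ kInfl m t q ℓ = range m ∧
      (∑ v ∈ range m, q v) = ∑ v ∈ range m, p v ∧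
      kInfl m t q (ℓ - 1) = range k := by
  classical
  set S := kInfl m t p (ℓ - 1) with hS
  set A := (range k) \ S with hA
  set B := S \ (range k) with hB
  have hSm : S ⊆ range m := kInfl_subset_range m t p _
  have hcardAB : A.card = B.card := by
    have h1 := card_sdiff_add_card_inter (range k) S
    have h2 := card_sdiff_add_card_inter S (range k)
    rw [inter_comm] at h2
    rw [card_range] at h1
    rw [hA, hB]
    omega
  have hABdisj : ∀ x, ¬ (x ∈ A ∧ x ∈ B) := by
    rintro x ⟨ha, hb⟩
    exact (mem_sdiff.1 hb).2 (mem_sdiff.1 ha).1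
  have e : {x // x ∈ A} ≃ {x // x ∈ B} := Finset.equivOfCardEq hcardAB
  set π : ℕ → ℕ := fun x =>
    if hx : x ∈ A then (e ⟨x, hx⟩).1
    else if hx : x ∈ B then (e.symm ⟨x, hx⟩).1 else x with hπ
  have hπdefA : ∀ x (hx : x ∈ A), π x = (e ⟨x, hx⟩).1 := by
    intro x hx; simp only [hπ]; rw [dif_pos hx]
  have hπdefB : ∀ x (hx : x ∈ B), π x = (e.symm ⟨x, hx⟩).1 := by
    intro x hx
    have hxA : x ∉ A := fun h => hABdisj x ⟨h, hx⟩
    simp only [hπ]; rw [dif_neg hxA, dif_pos hx]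
  have hπfix : ∀ x, x ∉ A → x ∉ B → π x = x := by
    intro x h1 h2; simp only [hπ]; rw [dif_neg h1, dif_neg h2]
  have hπmemA : ∀ x (hx : x ∈ A), π x ∈ B := by
    intro x hx; rw [hπdefA x hx]; exact (e ⟨x, hx⟩).2
  have hπmemB : ∀ x (hx : x ∈ B), π x ∈ A := by
    intro x hx; rw [hπdefB x hx]; exact (e.symm ⟨x, hx⟩).2
  have hπinv : ∀ x, π (π x) = x := by
    intro x
    by_cases hx : x ∈ A
    · have h1 := hπmemA x hx
      rw [hπdefA x hx] at h1 ⊢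
      rw [hπdefB _ h1]
      have h2 : (⟨(e ⟨x, hx⟩).1, h1⟩ : {y // y ∈ B}) = e ⟨x, hx⟩ := Subtype.ext rfl
      rw [h2, Equiv.symm_apply_apply]
    · by_cases hx' : x ∈ B
      · have h1 := hπmemB x hx'
        rw [hπdefB x hx'] at h1 ⊢
        rw [hπdefA _ h1]
        have h2 : (⟨(e.symm ⟨x, hx'⟩).1, h1⟩ : {y // y ∈ A}) = e.symm ⟨x, hx'⟩ :=
          Subtype.ext rfl
        rw [h2, Equiv.apply_symm_apply]
      · rw [hπfix x hx hx', hπfix x hx hx']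
  have hπinvol : Function.Involutive π := hπinv
  have hπinj : Function.Injective π := hπinvol.injective
  have hπm : ∀ x, x < m → π x < m := by
    intro x hx
    by_cases h1 : x ∈ A
    · exact mem_range.1 (hSm (mem_sdiff.1 (hπmemA x h1)).1)
    · by_cases h2 : x ∈ B
      · have := mem_range.1 (mem_sdiff.1 (hπmemB x h2)).1
        omega
      · rw [hπfix x h1 h2]; exact hx
  have hgapAB : ∀ u ∈ A, ∀ v ∈ B, t v - p v < t u - p u := by
    intro u hu v hv
    obtain ⟨huk, huS⟩ := mem_sdiff.1 hu
    obtain ⟨hvS, hvk⟩ := mem_sdiff.1 hv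
    have hum : u < m := lt_trans (mem_range.1 huk) hkm
    exact gap_lt m (ℓ - 1) t p hp hum huS hvS
  have hgle : ∀ x, x < m → t (π x) - p (π x) ≤ t x := by
    intro x hx
    by_cases h1 : x ∈ A
    · have := hgapAB x h1 (π x) (hπmemA x h1)
      omega
    · by_cases h2 : x ∈ B
      · have hπxA := hπmemB x h2
        have hk1 : π x < k := mem_range.1 (mem_sdiff.1 hπxA).1
        have hk2 : ¬ (x < k) := fun h => (mem_sdiff.1 h2).2 (mem_range.2 h)
        have h3 : t (π x) ≤ t x := hmono (π x) x (by omega) hx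
        omega
      · rw [hπfix x h1 h2]; omega
  set q : ℕ → ℕ := fun x => t x - (t (π x) - p (π x)) with hq
  have hqle : ∀ v, v < m → q v ≤ t v := by
    intro v _; simp only [hq]; exact Nat.sub_le _ _
  have hgapq : ∀ x, x < m → t x - q x = t (π x) - p (π x) := by
    intro x hx; simp only [hq]
    have := hgle x hx
    omega
  have hc1 : ∀ r, (kInfl m t p r).image π ⊆ kInfl m t q r := by
    refine kInfl_image_subset m t p q π hπinj hπm hqle ?_
    intro x hx
    have h1 := hgapq (π x) (hπm x hx)
    rw [hπinv x] at h1
    exact le_of_eq h1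
  have hc2 : ∀ r, (kInfl m t q r).image π ⊆ kInfl m t p r := by
    refine kInfl_image_subset m t q p π hπinj hπm (fun y hy => hp y hy) ?_
    intro x hx
    exact le_of_eq (hgapq x hx).symm
  have hkeq : ∀ r, kInfl m t q r = (kInfl m t p r).image π := by
    intro r
    refine Subset.antisymm ?_ (hc1 r)
    intro y hy
    have h1 : π y ∈ kInfl m t p r := hc2 r (mem_image_of_mem π hy)
    have h2 := mem_image_of_mem π h1
    rwa [hπinv] at h2
  have himS : S.image π = range k := by
    apply Subset.antisymm
    · intro y hy
      obtain ⟨x, hx, rfl⟩ := mem_image.1 hy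
      by_cases hB' : x ∈ B
      · exact (mem_sdiff.1 (hπmemB x hB')).1
      · have hxk : x ∈ range k := by
          by_contra h
          exact hB' (mem_sdiff.2 ⟨hx, h⟩)
        have hxA : x ∉ A := fun h => (mem_sdiff.1 h).2 hx
        rw [hπfix x hxA hB']; exact hxk
    · intro y hy
      by_cases hA' : y ∈ A
      · have h1 := hπmemA y hA'
        have h2 : π y ∈ S := (mem_sdiff.1 h1).1
        have h3 := mem_image_of_mem π h2
        rwa [hπinv] at h3
      · have hyS : y ∈ S := by
          by_contra h
          exact hA' (mem_sdiff.2 ⟨hy, h⟩)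
        have hyB : y ∉ B := fun h => (mem_sdiff.1 h).2 hy
        have h3 := mem_image_of_mem π hyS
        rwa [hπfix y hA' hyB] at h3
  have himm : (range m).image π = range m := by
    refine eq_of_subset_of_card_le ?_ ?_
    · intro y hy
      obtain ⟨x, hx, rfl⟩ := mem_image.1 hy
      exact mem_range.2 (hπm x (mem_range.1 hx))
    · rw [card_image_of_injective _ hπinj]
  have hsum : ∑ v ∈ range m, q v = ∑ v ∈ range m, p v := by
    have h3 : ∑ v ∈ range m, (t (π v) - p (π v)) = ∑ v ∈ range m, (t v - p v) := by
      refine sum_nbij' π π ?_ ?_ ?_ ?_ ?_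
      · exact fun a ha => mem_range.2 (hπm a (mem_range.1 ha))
      · exact fun a ha => mem_range.2 (hπm a (mem_range.1 ha))
      · exact fun a _ => hπinv a
      · exact fun a _ => hπinv a
      · exact fun a _ => rfl
    have h4 : ∑ v ∈ range m, (q v + (t (π v) - p (π v))) = ∑ v ∈ range m, t v := by
      refine sum_congr rfl ?_
      intro v hv
      have h5 := hgle v (mem_range.1 hv)
      simp only [hq]
      omega
    have h5 : ∑ v ∈ range m, (p v + (t v - p v)) = ∑ v ∈ range m, t v := by
      refine sum_congr rfl ?_
      intro v hv
      have := hp v (mem_range.1 hv)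
      omega
    rw [sum_add_distrib] at h4 h5
    omega
  refine ⟨q, hqle, ?_, hsum, ?_⟩
  · rw [hkeq ℓ, hcov, himm]
  · rw [hkeq (ℓ - 1), ← hS, himS]
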